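/- Let d ≥ 2 be an even integer and e = d/2. Let Λ = {X, Y} be a symbol of rank n which is an e-cocore, with s = |X|, t = |Y|, and suppose δ = s − t is a positive odd integer. Suppose there exists y ∈ Y with y + e ∉ X, and let y₀ be the largest such element of Y. Then 2(n − y₀) + #{y ∈ Y : y < y₀} + #{x ∈ X : y₀ − x > −e} ≥ 2δ. -/

import Mathlib

lemma sum_lower (lo : ℕ) (S : Finset ℕ) :
    (∀ x ∈ S, lo ≤ x) → S.card * lo + ∑ i ∈ Finset.range S.card, i ≤ ∑ x ∈ S, x := by
  induction S using Finset.induction_on_max with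
  | empty => simp
  | insert a s ha ih =>
    intro h
    have hs : ∀ x ∈ s, lo ≤ x := fun x hx => h x (Finset.mem_insert_of_mem hx)
    have hsub : s ⊆ Finset.Ico lo a := fun x hx => Finset.mem_Ico.mpr ⟨hs x hx, ha x hx⟩
    have hcard : s.card ≤ a - lo := by simpa using Finset.card_le_card hsub
    have hla : lo ≤ a := h a (Finset.mem_insert_self a s)
    have hnotmem : a ∉ s := fun hx => lt_irrefl a (ha a hx)
    rw [Finset.card_insert_of_notMem hnotmem, Finset.sum_insert hnotmem,
      Finset.sum_range_succ, Nat.succ_mul]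
    have h1 := ih hs
    have h3 : lo + s.card ≤ a := by omega
    linarith

lemma gauss (c : ℕ) : 2 * (∑ i ∈ Finset.range c, i) + c = c * c := by
  induction c with
  | zero => simp
  | succ n ih =>
    rw [Finset.sum_range_succ]
    have h2 : (n+1)*(n+1) = n*n + (2*n+1) := by ring
    rw [h2]
    linarith

set_option maxHeartbeats 1000000 in
lemma key_arith (a b m e y0 SAs SBs SBb SA SB n s t : ℕ)
    (h1 : SA = SAs + (SBb + m * e))
    (h2 : SB = SBs + y0 + SBb)
    (h3 : a * a ≤ 2 * SAs + a)
    (h4 : b * b ≤ 2 * SBs + b)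
    (h5 : 2 * (m * (y0 + 1)) + m * m ≤ 2 * SBb + m)
    (h6 : a ≤ y0 + e) (h7 : b ≤ y0)
    (h8 : s = a + m) (h9 : t = b + m + 1)
    (h10 : SA + SB ≤ n + ((a + b + 2 * m) ^ 2) / 4) :
    2 * ((s : ℤ) - (t : ℤ)) ≤ 2 * ((n : ℤ) - (y0 : ℤ)) + (b : ℤ) + (a : ℤ) := by
  have hK4 : ((a + b + 2 * m) ^ 2) / 4 * 4 ≤ (a + b + 2 * m) ^ 2 := Nat.div_mul_le_self _ _
  have c3 : (a : ℤ) * a ≤ 2 * SAs + a := by exact_mod_cast h3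
  have c4 : (b : ℤ) * b ≤ 2 * SBs + b := by exact_mod_cast h4
  have c5 : 2 * ((m : ℤ) * (y0 + 1)) + m * m ≤ 2 * SBb + m := by exact_mod_cast h5
  have c1 : (SA : ℤ) = SAs + (SBb + m * e) := by exact_mod_cast h1
  have c2 : (SB : ℤ) = SBs + y0 + SBb := by exact_mod_cast h2
  have c10 : (SA : ℤ) + SB ≤ n + ((((a + b + 2 * m) ^ 2) / 4 : ℕ) : ℤ) := by
    exact_mod_cast h10
  have cK4 : ((((a + b + 2 * m) ^ 2) / 4 : ℕ) : ℤ) * 4 ≤ ((a : ℤ) + b + 2 * m) ^ 2 := by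
    push_cast
    exact_mod_cast hK4
  have hq : (0 : ℤ) ≤ (m : ℤ) * (2 * y0 + 1 + e - a - b) := by
    have h0 : (0 : ℤ) ≤ (m : ℤ) := Int.natCast_nonneg m
    have hab : a + b ≤ 2 * y0 + e := by omega
    have hab' : (a : ℤ) + b ≤ 2 * y0 + e := by exact_mod_cast hab
    apply mul_nonneg h0
    linarith
  have hs : (s : ℤ) = a + m := by exact_mod_cast h8
  have ht : (t : ℤ) = b + m + 1 := by exact_mod_cast h9
  rw [hs, ht]
  nlinarith [c1, c2, c3, c4, c5, c10, cK4, hq, sq_nonneg ((a : ℤ) - b - 2)]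

/-- The rank of a symbol `{A, B}`: `Σ_A + Σ_B − ⌊(|A|+|B|−1)²/4⌋`. -/
def srank (A B : Finset ℕ) : ℕ :=
  ((∑ x ∈ A, x) + ∑ y ∈ B, y) - (A.card + B.card - 1) ^ 2 / 4

/-- A symbol `{A, B}` is an `e`-cocore if `x − e ∈ B` for every `x ∈ A` with `x ≥ e`,
and `y − e ∈ A` for every `y ∈ B` with `y ≥ e`. -/
def IsSymbolCocore (e : ℕ) (A B : Finset ℕ) : Prop :=
  (∀ x ∈ A, e ≤ x → x - e ∈ B) ∧ (∀ y ∈ B, e ≤ y → y - e ∈ A)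

/-- Let `d ≥ 2` be even, `e = d/2`, and `{A, B}` an `e`-cocore symbol of rank `n`
with `δ = |A| − |B|` a positive odd integer. If `y₀` is the largest element of
`{y ∈ B : y + e ∉ A}` (assumed nonempty), then
`2(n − y₀) + #{y ∈ B : y < y₀} + #{x ∈ A : y₀ − x > −e} ≥ 2δ`. -/
theorem symplectic_perversity_lower_bound (d : ℕ) (hd : 2 ≤ d) (heven : d % 2 = 0)
    (A B : Finset ℕ) (hAB : IsSymbolCocore (d / 2) A B)
    (hδpos : (0 : ℤ) < (A.card : ℤ) - (B.card : ℤ))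
    (hδodd : Odd ((A.card : ℤ) - (B.card : ℤ)))
    (hne : (B.filter fun y => y + d / 2 ∉ A).Nonempty)
    (y0 : ℕ) (hy0 : y0 = (B.filter fun y => y + d / 2 ∉ A).max' hne) :
    2 * ((A.card : ℤ) - (B.card : ℤ)) ≤
      2 * ((srank A B : ℤ) - (y0 : ℤ))
        + ((B.filter fun y => y < y0).card : ℤ)
        + ((A.filter fun x => x < y0 + d / 2).card : ℤ) := by
  obtain ⟨hA, -⟩ := hAB
  have hy0f := Finset.max'_mem _ hne
  rw [← hy0] at hy0f
  have hy0B : y0 ∈ B := (Finset.mem_filter.mp hy0f).1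
  have hy0nA : y0 + d / 2 ∉ A := (Finset.mem_filter.mp hy0f).2
  have hmax : ∀ y ∈ B, y + d / 2 ∉ A → y ≤ y0 := by
    intro y hyB hynA
    rw [hy0]
    exact Finset.le_max' _ _ (Finset.mem_filter.mpr ⟨hyB, hynA⟩)
  -- the bijection between the big parts
  have hAbimg : A.filter (fun x => ¬ x < y0 + d / 2) =
      (B.filter (fun y => y0 < y)).image (· + d / 2) := by
    ext z
    simp only [Finset.mem_filter, Finset.mem_image, not_lt]
    constructor
    · rintro ⟨hzA, hz⟩
      have hez : d / 2 ≤ z := by omega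
      have h1 : z - d / 2 ∈ B := hA z hzA hez
      have h2 : z ≠ y0 + d / 2 := fun h => hy0nA (h ▸ hzA)
      exact ⟨z - d / 2, ⟨h1, by omega⟩, by omega⟩
    · rintro ⟨y, ⟨hyB, hy0y⟩, rfl⟩
      refine ⟨?_, by omega⟩
      by_contra hc
      exact absurd (hmax y hyB hc) (by omega)
  have hmAb : (A.filter (fun x => ¬ x < y0 + d / 2)).card =
      (B.filter (fun y => y0 < y)).card := by
    rw [hAbimg, Finset.card_image_of_injective _ (add_left_injective (d / 2))]
  have hsplitA : (A.filter (fun x => x < y0 + d / 2)).card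
      + (A.filter (fun x => ¬ x < y0 + d / 2)).card = A.card :=
    Finset.card_filter_add_card_filter_not _
  have hcardA : A.card = (A.filter (fun x => x < y0 + d / 2)).card
      + (B.filter (fun y => y0 < y)).card := by omega
  have hsumAb : ∑ x ∈ A.filter (fun x => ¬ x < y0 + d / 2), x =
      (∑ y ∈ B.filter (fun y => y0 < y), y)
        + (B.filter (fun y => y0 < y)).card * (d / 2) := by
    rw [hAbimg, Finset.sum_image (by intro x _ y _ h; simp only at h; omega)]
    rw [Finset.sum_add_distrib, Finset.sum_const, smul_eq_mul]
  have hsplitAsum : (∑ x ∈ A.filter (fun x => x < y0 + d / 2), x)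
      + (∑ x ∈ A.filter (fun x => ¬ x < y0 + d / 2), x) = ∑ x ∈ A, x :=
    Finset.sum_filter_add_sum_filter_not A _ _
  have hsumA : ∑ x ∈ A, x = (∑ x ∈ A.filter (fun x => x < y0 + d / 2), x)
      + ((∑ y ∈ B.filter (fun y => y0 < y), y)
        + (B.filter (fun y => y0 < y)).card * (d / 2)) := by omega
  -- split B
  have hBnot : B.filter (fun y => ¬ y < y0) = insert y0 (B.filter (fun y => y0 < y)) := by
    ext z
    simp only [Finset.mem_filter, Finset.mem_insert, not_lt]
    constructor
    · rintro ⟨hzB, hz⟩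
      rcases eq_or_lt_of_le hz with h | h
      · exact Or.inl h.symm
      · exact Or.inr ⟨hzB, h⟩
    · rintro (rfl | ⟨hzB, hz⟩)
      · exact ⟨hy0B, le_refl _⟩
      · exact ⟨hzB, le_of_lt hz⟩
  have hy0Bb : y0 ∉ B.filter (fun y => y0 < y) := by simp
  have hsplitB : (B.filter (fun y => y < y0)).card
      + (B.filter (fun y => ¬ y < y0)).card = B.card :=
    Finset.card_filter_add_card_filter_not _
  have hcardB : B.card = (B.filter (fun y => y < y0)).card
      + (B.filter (fun y => y0 < y)).card + 1 := by
    rw [hBnot, Finset.card_insert_of_notMem hy0Bb] at hsplitB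
    omega
  have hsplitBsum : (∑ y ∈ B.filter (fun y => y < y0), y)
      + (∑ y ∈ B.filter (fun y => ¬ y < y0), y) = ∑ y ∈ B, y :=
    Finset.sum_filter_add_sum_filter_not B _ _
  have hsumB : ∑ y ∈ B, y = (∑ y ∈ B.filter (fun y => y < y0), y) + y0
      + (∑ y ∈ B.filter (fun y => y0 < y), y) := by
    rw [hBnot, Finset.sum_insert hy0Bb] at hsplitBsum
    omega
  -- lower bounds on the sums
  have hAslb : (A.filter (fun x => x < y0 + d / 2)).card
      * (A.filter (fun x => x < y0 + d / 2)).card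
      ≤ 2 * (∑ x ∈ A.filter (fun x => x < y0 + d / 2), x)
        + (A.filter (fun x => x < y0 + d / 2)).card := by
    have h1 := sum_lower 0 (A.filter (fun x => x < y0 + d / 2)) (fun x _ => Nat.zero_le x)
    rw [← gauss (A.filter (fun x => x < y0 + d / 2)).card]
    omega
  have hBslb : (B.filter (fun y => y < y0)).card * (B.filter (fun y => y < y0)).card
      ≤ 2 * (∑ y ∈ B.filter (fun y => y < y0), y) + (B.filter (fun y => y < y0)).card := by
    have h1 := sum_lower 0 (B.filter (fun y => y < y0)) (fun x _ => Nat.zero_le x)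
    rw [← gauss (B.filter (fun y => y < y0)).card]
    omega
  have hBblb : 2 * ((B.filter (fun y => y0 < y)).card * (y0 + 1))
      + (B.filter (fun y => y0 < y)).card * (B.filter (fun y => y0 < y)).card
      ≤ 2 * (∑ y ∈ B.filter (fun y => y0 < y), y) + (B.filter (fun y => y0 < y)).card := by
    have h1 := sum_lower (y0 + 1) (B.filter (fun y => y0 < y)) (by
      intro x hx
      have := (Finset.mem_filter.mp hx).2
      omega)
    rw [← gauss (B.filter (fun y => y0 < y)).card]
    linarith
  -- cardinality upper bounds
  have haub : (A.filter (fun x => x < y0 + d / 2)).card ≤ y0 + d / 2 := by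
    have hsub : A.filter (fun x => x < y0 + d / 2) ⊆ Finset.range (y0 + d / 2) :=
      fun x hx => Finset.mem_range.mpr (Finset.mem_filter.mp hx).2
    simpa using Finset.card_le_card hsub
  have hbub : (B.filter (fun y => y < y0)).card ≤ y0 := by
    have hsub : B.filter (fun y => y < y0) ⊆ Finset.range y0 :=
      fun x hx => Finset.mem_range.mpr (Finset.mem_filter.mp hx).2
    simpa using Finset.card_le_card hsub
  -- rank bound
  have hK : (∑ x ∈ A, x) + (∑ y ∈ B, y) ≤ srank A B
      + (((A.filter (fun x => x < y0 + d / 2)).card + (B.filter (fun y => y < y0)).card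
        + 2 * (B.filter (fun y => y0 < y)).card) ^ 2) / 4 := by
    have hc : A.card + B.card - 1 = (A.filter (fun x => x < y0 + d / 2)).card
        + (B.filter (fun y => y < y0)).card + 2 * (B.filter (fun y => y0 < y)).card := by
      omega
    unfold srank
    rw [hc]
    generalize ((A.filter (fun x => x < y0 + d / 2)).card + (B.filter (fun y => y < y0)).card
        + 2 * (B.filter (fun y => y0 < y)).card) ^ 2 = Q
    omega
  exact key_arith _ _ _ _ _ _ _ _ _ _ _ _ _ hsumA hsumB hAslb hBslb hBblb haub hbub
    hcardA hcardB hK
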